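/- arXiv:1810.05039 — 2 statements merged into one kernel-verified Lean document; each statement's English description precedes it below -/
import Mathlib

section
/- The integral over ℝ of the density (2πσ²)^{−1/2}·exp(−x²/(2σ²))·[1 − 2 Re(A_w)(1 − E(x)) + |A_w|²(1 − E(x))²], where E(x) = exp((x² − (x−g)²)/(4σ²)), equals 1 − 2[Re(A_w) − |A_w|²](1 − exp(−g²/(8σ²))). -/
open MeasureTheory Real

theorem position_density_integral (σ g : ℝ) (hσ : 0 < σ) (Aw : ℂ) :
    ∫ x : ℝ, (2 * Real.pi * σ ^ 2) ^ (-(1 / 2 : ℝ))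
        * Real.exp (-x ^ 2 / (2 * σ ^ 2))
        * (1 - 2 * Aw.re * (1 - Real.exp ((x ^ 2 - (x - g) ^ 2) / (4 * σ ^ 2)))
          + ‖Aw‖ ^ 2
            * (1 - Real.exp ((x ^ 2 - (x - g) ^ 2) / (4 * σ ^ 2))) ^ 2)
    = 1 - 2 * (Aw.re - ‖Aw‖ ^ 2)
          * (1 - Real.exp (-g ^ 2 / (8 * σ ^ 2))) := by
  have hσ2 : (0:ℝ) < σ ^ 2 := by positivity
  have hb : (0:ℝ) < 1 / (2 * σ ^ 2) := by positivity
  set a := Aw.re with ha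
  set b := ‖Aw‖ ^ 2 with hbdef
  set N := (2 * Real.pi * σ ^ 2) ^ (-(1 / 2 : ℝ)) with hNdef
  have hint : ∀ c : ℝ,
      Integrable (fun x : ℝ => Real.exp (-(x - c) ^ 2 / (2 * σ ^ 2))) := by
    intro c
    have h := (integrable_exp_neg_mul_sq hb).comp_sub_right c
    refine h.congr ?_
    filter_upwards with x
    congr 1
    field_simp
  have hval : ∀ c : ℝ,
      (∫ x : ℝ, Real.exp (-(x - c) ^ 2 / (2 * σ ^ 2)))
        = Real.sqrt (2 * Real.pi * σ ^ 2) := by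
    intro c
    have h1 : (∫ x : ℝ, Real.exp (-(x - c) ^ 2 / (2 * σ ^ 2)))
        = ∫ x : ℝ, Real.exp (-(1 / (2 * σ ^ 2)) * x ^ 2) := by
      rw [← integral_sub_right_eq_self
        (fun x => Real.exp (-(1 / (2 * σ ^ 2)) * x ^ 2)) c]
      congr 1; ext x; congr 1; field_simp
    rw [h1, integral_gaussian]
    congr 1
    field_simp
  have hN1 : N * Real.sqrt (2 * Real.pi * σ ^ 2) = 1 := by
    have hpos : (0:ℝ) < 2 * Real.pi * σ ^ 2 := by positivity
    rw [hNdef, Real.sqrt_eq_rpow, ← Real.rpow_add hpos]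
    norm_num
  have heq : ∀ x : ℝ,
      N * Real.exp (-x ^ 2 / (2 * σ ^ 2))
        * (1 - 2 * a * (1 - Real.exp ((x ^ 2 - (x - g) ^ 2) / (4 * σ ^ 2)))
          + b * (1 - Real.exp ((x ^ 2 - (x - g) ^ 2) / (4 * σ ^ 2))) ^ 2)
      = (1 - 2 * a + b) * (N * Real.exp (-(x - 0) ^ 2 / (2 * σ ^ 2)))
        + ((2 * a - 2 * b) * Real.exp (-g ^ 2 / (8 * σ ^ 2)))
            * (N * Real.exp (-(x - g / 2) ^ 2 / (2 * σ ^ 2)))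
        + b * (N * Real.exp (-(x - g) ^ 2 / (2 * σ ^ 2))) := by
    intro x
    have e1 : Real.exp (-x ^ 2 / (2 * σ ^ 2))
        * Real.exp ((x ^ 2 - (x - g) ^ 2) / (4 * σ ^ 2))
        = Real.exp (-g ^ 2 / (8 * σ ^ 2))
          * Real.exp (-(x - g / 2) ^ 2 / (2 * σ ^ 2)) := by
      rw [← Real.exp_add, ← Real.exp_add]
      congr 1
      field_simp
      ring
    have e2 : Real.exp (-x ^ 2 / (2 * σ ^ 2))
        * Real.exp ((x ^ 2 - (x - g) ^ 2) / (4 * σ ^ 2)) ^ 2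
        = Real.exp (-(x - g) ^ 2 / (2 * σ ^ 2)) := by
      rw [sq (Real.exp ((x ^ 2 - (x - g) ^ 2) / (4 * σ ^ 2))), ← Real.exp_add,
        ← Real.exp_add]
      congr 1
      field_simp
      ring
    have hx0 : (-(x - 0) ^ 2 / (2 * σ ^ 2)) = -x ^ 2 / (2 * σ ^ 2) := by ring_nf
    rw [hx0]
    linear_combination N * (2 * a - 2 * b) * e1 + N * b * e2
  have i1 : Integrable (fun x : ℝ =>
      (1 - 2 * a + b) * (N * Real.exp (-(x - 0) ^ 2 / (2 * σ ^ 2)))) :=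
    ((hint 0).const_mul N).const_mul _
  have i2 : Integrable (fun x : ℝ =>
      ((2 * a - 2 * b) * Real.exp (-g ^ 2 / (8 * σ ^ 2)))
        * (N * Real.exp (-(x - g / 2) ^ 2 / (2 * σ ^ 2)))) :=
    ((hint (g / 2)).const_mul N).const_mul _
  have i3 : Integrable (fun x : ℝ =>
      b * (N * Real.exp (-(x - g) ^ 2 / (2 * σ ^ 2)))) :=
    ((hint g).const_mul N).const_mul _
  have i12 : Integrable (fun x : ℝ =>
      (1 - 2 * a + b) * (N * Real.exp (-(x - 0) ^ 2 / (2 * σ ^ 2)))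
      + ((2 * a - 2 * b) * Real.exp (-g ^ 2 / (8 * σ ^ 2)))
          * (N * Real.exp (-(x - g / 2) ^ 2 / (2 * σ ^ 2)))) := by
    exact i1.add i2
  calc
    (∫ x : ℝ, N * Real.exp (-x ^ 2 / (2 * σ ^ 2))
        * (1 - 2 * a * (1 - Real.exp ((x ^ 2 - (x - g) ^ 2) / (4 * σ ^ 2)))
          + b * (1 - Real.exp ((x ^ 2 - (x - g) ^ 2) / (4 * σ ^ 2))) ^ 2))
      = ∫ x : ℝ,
          ((1 - 2 * a + b) * (N * Real.exp (-(x - 0) ^ 2 / (2 * σ ^ 2)))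
          + ((2 * a - 2 * b) * Real.exp (-g ^ 2 / (8 * σ ^ 2)))
              * (N * Real.exp (-(x - g / 2) ^ 2 / (2 * σ ^ 2))))
          + b * (N * Real.exp (-(x - g) ^ 2 / (2 * σ ^ 2))) := by
        congr 1; funext x; rw [heq x]
    _ = 1 - 2 * (a - b) * (1 - Real.exp (-g ^ 2 / (8 * σ ^ 2))) := by
        rw [integral_add i12 i3, integral_add i1 i2]
        simp only [integral_const_mul, hval]
        set S := Real.sqrt (2 * Real.pi * σ ^ 2)
        linear_combination (1 - 2 * a + b + (2 * a - 2 * b)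
          * Real.exp (-g ^ 2 / (8 * σ ^ 2)) + b) * hN1
end

section
/- The Wigner function W₂ attains negative values for suitable parameters: with σ = 1, φ = π/2, there exist g ∈ ℝ and (x, k) ∈ ℝ² such that W₂(x,k) < 0, where W₂(x,k) = (1/8π)e^{−2k²}[e^{−x²/2}(1 − cos φ) + 2e^{−(x−g)²/2}] − (1/4π)e^{−2k²}e^{−(2x−g)²/8}[cos(gk) − cos(gk+φ)]. -/
theorem wigner_W2_negative :
    ∃ (g x k : ℝ),
      (1 / (8 * Real.pi)) * Real.exp (-2 * k ^ 2)
          * (Real.exp (-x ^ 2 / 2) * (1 - Real.cos (Real.pi / 2))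
            + 2 * Real.exp (-(x - g) ^ 2 / 2))
        - (1 / (4 * Real.pi)) * Real.exp (-2 * k ^ 2)
          * Real.exp (-(2 * x - g) ^ 2 / 8)
          * (Real.cos (g * k) - Real.cos (g * k + Real.pi / 2)) < 0 := by
  refine ⟨10, 5, 0, ?_⟩
  have hπ : (0:ℝ) < Real.pi := Real.pi_pos
  norm_num [Real.cos_pi_div_two, Real.exp_zero]
  have hmul : Real.exp (-(25/2) : ℝ) * Real.exp (25/2 : ℝ) = 1 := by
    rw [← Real.exp_add]; norm_num
  have h1 : Real.exp (-(25/2) : ℝ) < 1/2 := by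
    nlinarith [Real.exp_pos (-(25/2) : ℝ), Real.add_one_le_exp (25/2 : ℝ)]
  have hπi : (0:ℝ) < Real.pi⁻¹ := by positivity
  nlinarith [Real.exp_pos (-(25/2) : ℝ)]
end
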